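/- A finite collection of pairwise compatible closed subintervals of [0,1] with endpoints in a fixed set {a_0 < a_1 < ... < a_n} that is maximal with respect to this property (among collections of distinct closed intervals with endpoints in this set) has exactly 2n+1 elements. -/

import Mathlib

/-- Two closed intervals `[p.1, p.2]` and `[q.1, q.2]` (with integer indices standing
for the points `a_{p.1} ≤ a_{p.2}` of a fixed set `a_0 < a_1 < ... < a_n`) are
compatible if one contains the other or they are disjoint. -/
def NatIntervalCompatible (p q : ℕ × ℕ) : Prop :=
  (q.1 ≤ p.1 ∧ p.2 ≤ q.2) ∨ (p.1 ≤ q.1 ∧ q.2 ≤ p.2) ∨ p.2 < q.1 ∨ q.2 < p.1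

theorem aux_card_compat (d : ℕ) : ∀ (m : ℕ) (S : Finset (ℕ × ℕ)),
    (∀ p ∈ S, m ≤ p.1 ∧ p.1 ≤ p.2 ∧ p.2 ≤ m + d) →
    (∀ p ∈ S, ∀ q ∈ S, p ≠ q → NatIntervalCompatible p q) →
    (∀ q : ℕ × ℕ, m ≤ q.1 → q.1 ≤ q.2 → q.2 ≤ m + d →
      (∀ p ∈ S, p ≠ q → NatIntervalCompatible p q) → q ∈ S) →
    S.card = 2 * d + 1 := by
  induction d using Nat.strong_induction_on with
  | _ d IH =>
  intro m S hS hcompat hmax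
  rcases Nat.eq_zero_or_pos d with rfl | hd
  · have huniq : ∀ p ∈ S, p = (m, m) := by
      intro p hp
      have := hS p hp
      have : p.1 = m ∧ p.2 = m := by omega
      exact Prod.ext this.1 this.2
    have hm : (m, m) ∈ S := by
      apply hmax (m, m) le_rfl le_rfl (by omega)
      intro p hp hne
      exact absurd (huniq p hp) hne
    rw [Finset.eq_singleton_iff_unique_mem.mpr ⟨hm, huniq⟩]
    simp
  · -- d ≥ 1
    set n := m + d with hn
    have hmn : m < n := by omega
    -- the full interval is in S
    have hfull : (m, n) ∈ S := by
      apply hmax (m, n) le_rfl (le_of_lt hmn) le_rfl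
      intro p hp _
      obtain ⟨h1, h2, h3⟩ := hS p hp
      simp only [NatIntervalCompatible]
      omega
    -- the left singleton is in S
    have hsing : (m, m) ∈ S := by
      apply hmax (m, m) le_rfl le_rfl (by omega)
      intro p hp _
      have := hS p hp
      simp only [NatIntervalCompatible]
      omega
    -- K: right endpoints j < n with (m,j) ∈ S
    set K : Finset ℕ := (Finset.range n).filter (fun j => (m, j) ∈ S) with hK
    have hKne : K.Nonempty := ⟨m, by simp [hK, hmn, hsing]⟩
    set k := K.max' hKne with hk
    have hkmem : k ∈ K := K.max'_mem hKne
    have hkS : (m, k) ∈ S := by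
      simp only [hK, Finset.mem_filter] at hkmem; exact hkmem.2
    have hkn : k < n := by
      simp only [hK, Finset.mem_filter, Finset.mem_range] at hkmem; exact hkmem.1
    have hmk : m ≤ k := by
      have h := hS _ hkS
      exact h.2.1
    have hkmax : ∀ j, j < n → (m, j) ∈ S → j ≤ k := by
      intro j hj hjS
      exact K.le_max' j (by simp [hK, hj, hjS])
    -- the complementary interval (k+1, n) is in S
    have hright : (k + 1, n) ∈ S := by
      apply hmax (k + 1, n) (by omega) (by omega) le_rfl
      intro p hp hne
      obtain ⟨hp1, hp2, hp3⟩ := hS p hp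
      simp only [NatIntervalCompatible]
      by_cases hb : p.2 ≤ k
      · omega
      by_cases ha : k + 1 ≤ p.1
      · omega
      have hne' : p ≠ (m, k) := by rintro rfl; exact hb (le_refl k)
      have hcmp := hcompat p hp (m, k) hkS hne'
      simp only [NatIntervalCompatible] at hcmp
      have hpm : p.1 = m := by omega
      by_cases hbn : p.2 < n
      · exfalso
        have hpS : (m, p.2) ∈ S := by
          rwa [show p = (m, p.2) from Prod.ext hpm rfl] at hp
        have := hkmax p.2 hbn hpS
        omega
      · omega
    -- every element of S other than (m,n) lies in [m,k] or [k+1,n]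
    have hsplit : ∀ p ∈ S, p ≠ (m, n) → p.2 ≤ k ∨ k + 1 ≤ p.1 := by
      intro p hp hne
      obtain ⟨hp1, hp2, hp3⟩ := hS p hp
      by_cases hb : p.2 ≤ k
      · exact Or.inl hb
      by_cases ha : k + 1 ≤ p.1
      · exact Or.inr ha
      exfalso
      have hc1 : p ≠ (m, k) := by rintro rfl; exact hb (le_refl k)
      have c1 := hcompat p hp (m, k) hkS hc1
      simp only [NatIntervalCompatible] at c1
      have hpm : p.1 = m := by omega
      have hc2 : p ≠ (k + 1, n) := by rintro rfl; exact ha (le_refl (k + 1))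
      have c2 := hcompat p hp (k + 1, n) hright hc2
      simp only [NatIntervalCompatible] at c2
      have hpn : p.2 = n := by omega
      exact hne (Prod.ext hpm hpn)
    -- split
    set T := S.erase (m, n) with hT
    set S₁ := T.filter (fun p => p.2 ≤ k) with hS₁
    set S₂ := T.filter (fun p => ¬ p.2 ≤ k) with hS₂
    have hmemT : ∀ p, p ∈ T ↔ p ∈ S ∧ p ≠ (m, n) := by
      intro p; simp [hT, Finset.mem_erase, and_comm]
    have hmem1 : ∀ p, p ∈ S₁ ↔ p ∈ S ∧ p.2 ≤ k := by
      intro p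
      simp only [hS₁, Finset.mem_filter, hmemT]
      constructor
      · rintro ⟨⟨h1, _⟩, h3⟩; exact ⟨h1, h3⟩
      · rintro ⟨h1, h3⟩
        refine ⟨⟨h1, ?_⟩, h3⟩
        rintro rfl; exact absurd h3 (by simp; omega)
    have hmem2 : ∀ p, p ∈ S₂ ↔ p ∈ S ∧ k + 1 ≤ p.1 := by
      intro p
      simp only [hS₂, Finset.mem_filter, hmemT]
      constructor
      · rintro ⟨⟨h1, h2⟩, h3⟩
        refine ⟨h1, ?_⟩
        rcases hsplit p h1 h2 with h | h
        · omega
        · exact h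
      · rintro ⟨h1, h3⟩
        have := hS p h1
        refine ⟨⟨h1, ?_⟩, by omega⟩
        rintro rfl; exact absurd h3 (by simp; omega)
    -- card S₁ = 2 * (k - m) + 1 by IH
    have hc1 : S₁.card = 2 * (k - m) + 1 := by
      apply IH (k - m) (by omega) m
      · intro p hp
        rw [hmem1] at hp
        have := hS p hp.1
        omega
      · intro p hp q hq hne
        rw [hmem1] at hp hq
        exact hcompat p hp.1 q hq.1 hne
      · intro q hq1 hq2 hq3 hcq
        rw [hmem1]
        refine ⟨hmax q hq1 hq2 (by omega) ?_, by omega⟩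
        intro p hp hne
        by_cases hpk : p.2 ≤ k
        · exact hcq p (by rw [hmem1]; exact ⟨hp, hpk⟩) hne
        · by_cases hpfull : p = (m, n)
          · subst hpfull
            exact Or.inr (Or.inl ⟨hq1, by omega⟩)
          · have := hsplit p hp hpfull
            have : k + 1 ≤ p.1 := by omega
            exact Or.inr (Or.inr (Or.inr (by omega)))
    -- card S₂ = 2 * (n - (k+1)) + 1 by IH
    have hc2 : S₂.card = 2 * (n - (k + 1)) + 1 := by
      apply IH (n - (k + 1)) (by omega) (k + 1)
      · intro p hp
        rw [hmem2] at hp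
        have := hS p hp.1
        omega
      · intro p hp q hq hne
        rw [hmem2] at hp hq
        exact hcompat p hp.1 q hq.1 hne
      · intro q hq1 hq2 hq3 hcq
        rw [hmem2]
        refine ⟨hmax q (by omega) hq2 (by omega) ?_, hq1⟩
        intro p hp hne
        by_cases hp1 : k + 1 ≤ p.1
        · exact hcq p (by rw [hmem2]; exact ⟨hp, hp1⟩) hne
        · by_cases hpfull : p = (m, n)
          · subst hpfull
            exact Or.inr (Or.inl ⟨by omega, by omega⟩)
          · have := hsplit p hp hpfull
            have : p.2 ≤ k := by omega
            exact Or.inr (Or.inr (Or.inl (by omega)))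
    have hcT : T.card = S₁.card + S₂.card :=
      (Finset.card_filter_add_card_filter_not (s := T) (p := fun p : ℕ × ℕ => p.2 ≤ k)).symm
    have hcS : S.card = T.card + 1 := by
      rw [hT, Finset.card_erase_of_mem hfull]
      have : 0 < S.card := Finset.card_pos.mpr ⟨_, hfull⟩
      omega
    omega

/-- A finite collection of pairwise compatible closed intervals with endpoints among
`a_0 < ... < a_n` that is maximal with respect to this property has exactly `2n+1`
elements. -/
theorem card_maximal_compatible_family (n : ℕ) (S : Finset (ℕ × ℕ))
    (hS : ∀ p ∈ S, p.1 ≤ p.2 ∧ p.2 ≤ n)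
    (hcompat : ∀ p ∈ S, ∀ q ∈ S, p ≠ q → NatIntervalCompatible p q)
    (hmax : ∀ q : ℕ × ℕ, q.1 ≤ q.2 → q.2 ≤ n →
      (∀ p ∈ S, p ≠ q → NatIntervalCompatible p q) → q ∈ S) :
    S.card = 2 * n + 1 := by
  apply aux_card_compat n 0 S
  · intro p hp; have := hS p hp; omega
  · exact hcompat
  · intro q _ hq1 hq2 hcq
    exact hmax q hq1 (by omega) hcq
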